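/- Let G₁ = (g₁, [,]₁, ϖ¹, φ¹) and G₂ = (g₂, [,]₂, ϖ², φ²) be Lie quasi-bialgebras with doubles d¹, d², and let ψ : g₁ → g₂ be a Lie quasi-bialgebra morphism (a Lie algebra morphism with ψ ϖ¹_x ψ* = ϖ²_{ψx} and ψ^{(3)} φ¹ = φ²). Then for all n ∈ ℕ, u ∈ g₁ and ξ ∈ g₂*: ψ ∘ p_{g₁} ∘ (ad¹_{ψ*ξ})ⁿ (u) = p_{g₂} ∘ (ad²_ξ)ⁿ (ψ u), where ad^j denotes the adjoint action of the double d^j = g_j ⊕ g_j* on itself and p_{g_j} is the projection onto g_j along g_j*. -/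

import Mathlib

section

/-- The bracket of the canonical double `d = g ⊕ g*` of a Lie quasi-bialgebra
`(g, [,], ϖ, φ)`, where `c ξ η = ⟨ξ⊗η⊗1, φ⟩` is the contraction of the associator:
`[x,y]_d = [x,y]`, `[x,ξ]_d = ϖ_x ξ − ad*_x ξ`,
`[ξ,η]_d = ⟨ξ⊗η⊗1, φ⟩ + ⟨η, ϖ_• ξ⟩`. -/
def brD {K L : Type*} [Field K] [LieRing L] [LieAlgebra K L]
    (ϖ : L →ₗ[K] Module.Dual K L →ₗ[K] L)
    (c : Module.Dual K L →ₗ[K] Module.Dual K L →ₗ[K] L) :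
    L × Module.Dual K L → L × Module.Dual K L → L × Module.Dual K L :=
  fun X Y =>
    (⁅X.1, Y.1⁆ + ϖ X.1 Y.2 - ϖ Y.1 X.2 + c X.2 Y.2,
      - Y.2 ∘ₗ LieAlgebra.ad K L X.1 + X.2 ∘ₗ LieAlgebra.ad K L Y.1
        + Y.2 ∘ₗ ϖ.flip X.2)

variable {K L M : Type*} [Field K] [LieRing L] [LieAlgebra K L]
  [LieRing M] [LieAlgebra K M]

/-- If `ψ : G₁ → G₂` is a morphism of Lie quasi-bialgebras, then
`ψ ∘ p_{g₁} ∘ (ad¹_{ψ*ξ})ⁿ ∘ i_{g₁} = p_{g₂} ∘ (ad²_ξ)ⁿ ∘ i_{g₂} ∘ ψ`. -/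
theorem stmt_11
    (ϖ₁ : L →ₗ[K] Module.Dual K L →ₗ[K] L)
    (c₁ : Module.Dual K L →ₗ[K] Module.Dual K L →ₗ[K] L)
    (ϖ₂ : M →ₗ[K] Module.Dual K M →ₗ[K] M)
    (c₂ : Module.Dual K M →ₗ[K] Module.Dual K M →ₗ[K] M)
    -- `G₁` and `G₂` are Lie quasi-bialgebras: the double brackets are Lie brackets
    (h1anti : ∀ X Y, brD ϖ₁ c₁ X Y = - brD ϖ₁ c₁ Y X)
    (h1jac : ∀ X Y Z, brD ϖ₁ c₁ X (brD ϖ₁ c₁ Y Z)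
      = brD ϖ₁ c₁ (brD ϖ₁ c₁ X Y) Z + brD ϖ₁ c₁ Y (brD ϖ₁ c₁ X Z))
    (h2anti : ∀ X Y, brD ϖ₂ c₂ X Y = - brD ϖ₂ c₂ Y X)
    (h2jac : ∀ X Y Z, brD ϖ₂ c₂ X (brD ϖ₂ c₂ Y Z)
      = brD ϖ₂ c₂ (brD ϖ₂ c₂ X Y) Z + brD ϖ₂ c₂ Y (brD ϖ₂ c₂ X Z))
    -- `ψ` is a Lie quasi-bialgebra morphism
    (ψ : L →ₗ⁅K⁆ M)
    (hϖψ : ∀ (x : L) (ξ : Module.Dual K M),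
      ψ (ϖ₁ x (ψ.toLinearMap.dualMap ξ)) = ϖ₂ (ψ x) ξ)
    (hcψ : ∀ ξ η : Module.Dual K M,
      ψ (c₁ (ψ.toLinearMap.dualMap ξ) (ψ.toLinearMap.dualMap η)) = c₂ ξ η) :
    ∀ (n : ℕ) (u : L) (ξ : Module.Dual K M),
      ψ (((fun Y => brD ϖ₁ c₁ (0, ψ.toLinearMap.dualMap ξ) Y)^[n] (u, 0)).1)
        = ((fun Y => brD ϖ₂ c₂ (0, ξ) Y)^[n] (ψ u, 0)).1 := by
  intro n u ξ
  suffices h : ∀ n : ℕ,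
      ψ (((fun Y => brD ϖ₁ c₁ (0, ψ.toLinearMap.dualMap ξ) Y)^[n] (u, 0)).1)
        = ((fun Y => brD ϖ₂ c₂ (0, ξ) Y)^[n] (ψ u, 0)).1 ∧
      ((fun Y => brD ϖ₁ c₁ (0, ψ.toLinearMap.dualMap ξ) Y)^[n] (u, 0)).2
        = ψ.toLinearMap.dualMap (((fun Y => brD ϖ₂ c₂ (0, ξ) Y)^[n] (ψ u, 0)).2) by
    exact (h n).1
  intro n
  induction n with
  | zero => simp
  | succ n ih =>
    obtain ⟨h1, h2⟩ := ih
    rw [Function.iterate_succ_apply', Function.iterate_succ_apply']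
    set X := (fun Y => brD ϖ₁ c₁ (0, ψ.toLinearMap.dualMap ξ) Y)^[n] (u, 0) with hX
    set Y := (fun Y => brD ϖ₂ c₂ (0, ξ) Y)^[n] (ψ u, 0) with hY
    constructor
    · simp only [brD, h2]
      simp [map_add, map_sub, hϖψ, hcψ, h1]
    · simp only [brD]
      ext v
      simp only [h2, LinearMap.add_apply, LinearMap.neg_apply, LinearMap.comp_apply,
        LinearMap.dualMap_apply, LieHom.coe_toLinearMap, LinearMap.flip_apply,
        LieAlgebra.ad_apply, map_zero, lie_zero, zero_lie, neg_zero, zero_add]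
      rw [LieHom.map_lie, h1, hϖψ]
      simp

end
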